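/- Let a group Γ act by isometries on a geodesic metric space X, and suppose there is a constant c₁ ≥ 1 such that every ball of radius 1 in X meets at most c₁ of the translates γF (γ ∈ Γ) of a fundamental set F, and such that translates meeting a common point make the corresponding group elements differ by an element of S = {γ : γF ∩ F ≠ ∅}. Then for every γ ∈ Γ, the word length of γ with respect to S satisfies w_S(γ) ≤ c₁ (d(x₀, γ·x₀) + 1), where x₀ ∈ F. -/

import Mathlib

open Pointwise


section aux
variable {X : Type*} [MetricSpace X] {Γ : Type*} [Group Γ] [MulAction Γ X]

lemma smul_set_closed (hiso : ∀ (γ : Γ) (x y : X), dist (γ • x) (γ • y) = dist x y)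
    {F : Set X} (hF : IsClosed F) (g : Γ) : IsClosed (g • F) := by
  have hcont : Continuous (fun x : X => g⁻¹ • x) :=
    (Isometry.of_dist_eq (fun x y => hiso g⁻¹ x y)).continuous
  have heq : g • F = (fun x : X => g⁻¹ • x) ⁻¹' F := by
    ext x
    simp [Set.mem_smul_set_iff_inv_smul_mem]
  rw [heq]
  exact hF.preimage hcont

lemma mem_S_of_inter {F : Set X} {g h : Γ} (hx : (g • F ∩ h • F).Nonempty) :
    ((g⁻¹ * h) • F ∩ F).Nonempty := by
  obtain ⟨x, hxg, hxh⟩ := hx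
  refine ⟨g⁻¹ • x, ?_, ?_⟩
  · obtain ⟨y, hy, rfl⟩ := hxh
    exact ⟨y, hy, by simp [mul_smul]⟩
  · obtain ⟨y, hy, rfl⟩ := hxg
    simpa using hy

lemma walk_to_list {F : Set X} {G : SimpleGraph Γ}
    (hadj : ∀ g h : Γ, G.Adj g h → ((g⁻¹ * h) • F ∩ F).Nonempty) :
    ∀ {g h : Γ} (w : G.Walk g h), ∃ l : List Γ,
      (∀ s ∈ l, (s • F ∩ F).Nonempty) ∧ l.prod = g⁻¹ * h ∧ l.length = w.length := by
  intro g h w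
  induction w with
  | nil => exact ⟨[], by simp, by simp, rfl⟩
  | @cons u v z adj w ih =>
    obtain ⟨l, hl, hprod, hlen⟩ := ih
    refine ⟨(u⁻¹ * v) :: l, ?_, ?_, by simp [hlen]⟩
    · intro s hs
      rcases List.mem_cons.1 hs with rfl | hs
      · exact hadj _ _ adj
      · exact hl s hs
    · simp [hprod, mul_assoc]

end aux

section chain
variable {X : Type*} [MetricSpace X] {Γ : Type*} [Group Γ] [MulAction Γ X]

lemma chain_lemma
    (hiso : ∀ (γ : Γ) (x y : X), dist (γ • x) (γ • y) = dist x y)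
    {F : Set X} (hFclosed : IsClosed F)
    {K : Set X} (hKconn : IsPreconnected K) (hKclosed : IsClosed K)
    (hKcover : ∀ x ∈ K, ∃ g : Γ, x ∈ g • F)
    (hT : ({g : Γ | (g • F ∩ K).Nonempty}).Finite)
    {a b : Γ} (ha : (a • F ∩ K).Nonempty) (hb : (b • F ∩ K).Nonempty) :
    ∃ l : List Γ, (∀ s ∈ l, (s • F ∩ F).Nonempty) ∧ l.prod = a⁻¹ * b ∧
      l.length ≤ ({g : Γ | (g • F ∩ K).Nonempty}).ncard := by
  classical
  set T : Set Γ := {g : Γ | (g • F ∩ K).Nonempty} with hTdef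
  set G : SimpleGraph Γ :=
    { Adj := fun g h => g ≠ h ∧ (g • F ∩ h • F ∩ K).Nonempty,
      symm := ⟨by
        rintro g h ⟨hne, x, ⟨h1, h2⟩, h3⟩
        exact ⟨hne.symm, x, ⟨h2, h1⟩, h3⟩⟩,
      loopless := ⟨fun g hg => hg.1 rfl⟩ } with hGdef
  have hreach : G.Reachable a b := by
    by_contra hnr
    set R : Set Γ := {g | G.Reachable a g} with hRdef
    set A : Set X := ⋃ g ∈ T ∩ R, g • F ∩ K with hAdef
    set B : Set X := ⋃ g ∈ T \ R, g • F ∩ K with hBdef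
    have hAclosed : IsClosed A :=
      (hT.inter_of_left R).isClosed_biUnion
        (fun g _ => (smul_set_closed hiso hFclosed g).inter hKclosed)
    have hBclosed : IsClosed B :=
      (hT.diff (t := R)).isClosed_biUnion
        (fun g _ => (smul_set_closed hiso hFclosed g).inter hKclosed)
    have hcoverAB : K ⊆ A ∪ B := by
      intro x hx
      obtain ⟨g, hg⟩ := hKcover x hx
      have hgT : g ∈ T := ⟨x, hg, hx⟩
      by_cases hgR : g ∈ R
      · exact Or.inl (Set.mem_biUnion ⟨hgT, hgR⟩ ⟨hg, hx⟩)
      · exact Or.inr (Set.mem_biUnion ⟨hgT, hgR⟩ ⟨hg, hx⟩)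
    have hdisj : ∀ x ∈ K, x ∈ A → x ∈ B → False := by
      intro x hxK hxA hxB
      obtain ⟨g, ⟨hgT, hgR⟩, hxg, -⟩ := Set.mem_iUnion₂.1 hxA
      obtain ⟨h, ⟨hhT, hhR⟩, hxh, -⟩ := Set.mem_iUnion₂.1 hxB
      rcases eq_or_ne g h with rfl | hne
      · exact hhR hgR
      · exact hhR (hgR.trans (SimpleGraph.Adj.reachable ⟨hne, x, ⟨hxg, hxh⟩, hxK⟩))
    obtain ⟨xa, hxa⟩ := ha
    have haT : a ∈ T := ⟨xa, hxa⟩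
    have hxaA : xa ∈ A := Set.mem_biUnion ⟨haT, SimpleGraph.Reachable.refl a⟩ hxa
    obtain ⟨xb, hxb⟩ := hb
    have hbT : b ∈ T := ⟨xb, hxb⟩
    have hxbB : xb ∈ B := Set.mem_biUnion ⟨hbT, hnr⟩ hxb
    have := hKconn Bᶜ Aᶜ hBclosed.isOpen_compl hAclosed.isOpen_compl
      (by
        intro x hx
        by_cases hxA : x ∈ A
        · exact Or.inl (fun hxB => hdisj x hx hxA hxB)
        · exact Or.inr hxA)
      ⟨xa, hxa.2, fun hxB => hdisj xa hxa.2 hxaA hxB⟩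
      ⟨xb, hxb.2, fun hxA => hdisj xb hxb.2 hxA hxbB⟩
    obtain ⟨x, hxK, hxB, hxA⟩ := this
    rcases hcoverAB hxK with h | h
    · exact hxA h
    · exact hxB h
  obtain ⟨w⟩ := hreach
  set p := w.toPath with hp
  have hsupp : ∀ {g h : Γ} (w' : G.Walk g h), (g • F ∩ K).Nonempty →
      ∀ v ∈ w'.support, v ∈ T := by
    intro g h w'
    induction w' with
    | nil =>
      intro hg v hv
      simp only [SimpleGraph.Walk.support_nil, List.mem_singleton] at hv
      subst hv; exact hg
    | @cons u v z adj w'' ih =>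
      intro hu x hx
      rw [SimpleGraph.Walk.support_cons, List.mem_cons] at hx
      rcases hx with rfl | hx
      · exact hu
      · refine ih ?_ x hx
        obtain ⟨y, ⟨hy1, hy2⟩, hy3⟩ := adj.2
        exact ⟨y, hy2, hy3⟩
  have hsuppT : ∀ v ∈ (p : G.Walk a b).support, v ∈ T := hsupp _ ha
  have hnodup : (p : G.Walk a b).support.Nodup := p.2.2
  have hlenbound : (p : G.Walk a b).length + 1 ≤ T.ncard := by
    have h1 : (p : G.Walk a b).support.toFinset.card
        = (p : G.Walk a b).support.length := List.toFinset_card_of_nodup hnodup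
    have h2 : (p : G.Walk a b).support.toFinset ⊆ hT.toFinset := by
      intro v hv
      rw [Set.Finite.mem_toFinset]
      exact hsuppT v (List.mem_toFinset.1 hv)
    have h3 := Finset.card_le_card h2
    rw [h1, SimpleGraph.Walk.length_support] at h3
    rwa [Set.ncard_eq_toFinset_card T hT]
  obtain ⟨l, hl, hprod, hlen⟩ := walk_to_list
    (F := F) (G := G)
    (fun g h adj => mem_S_of_inter (by obtain ⟨y, ⟨h1, h2⟩, h3⟩ := adj.2; exact ⟨y, h1, h2⟩))
    (p : G.Walk a b)
  exact ⟨l, hl, hprod, hlen ▸ le_trans (Nat.le_succ _) hlenbound⟩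

end chain

/-- the word-length lemma.  `Γ` acts by isometries on a geodesic
metric space `X` (geodesics are expressed by `hgeo`: any two points are joined by a
1-Lipschitz path parametrized by arclength), `F` is a closed fundamental set whose
translates cover `X`, `x₀ ∈ F`, every closed ball of radius 1 meets at most `c₁`
translates `γ • F`, and `S = {γ | γ•F ∩ F ≠ ∅}`.  Then every `γ ∈ Γ` is a product
of at most `c₁·(d(x₀, γ·x₀) + 1)` elements of `S`; i.e.
`w_S(γ) ≤ c₁ (d(x₀, γ x₀) + 1)`. -/
theorem word_length_bound
    {X : Type*} [MetricSpace X] {Γ : Type*} [Group Γ] [MulAction Γ X]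
    (hiso : ∀ (γ : Γ) (x y : X), dist (γ • x) (γ • y) = dist x y)
    (F : Set X) (hFclosed : IsClosed F)
    (hcover : ∀ x : X, ∃ γ : Γ, x ∈ γ • F)
    (x₀ : X) (hx₀ : x₀ ∈ F)
    (hgeo : ∀ x y : X, ∃ f : ℝ → X, f 0 = x ∧ f (dist x y) = y ∧
      ∀ s t : ℝ, dist (f s) (f t) ≤ |s - t|)
    (c₁ : ℝ) (hc₁ : 1 ≤ c₁)
    (hball : ∀ x : X,
      ({γ : Γ | (γ • F ∩ Metric.closedBall x 1).Nonempty}).Finite ∧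
      (({γ : Γ | (γ • F ∩ Metric.closedBall x 1).Nonempty}).ncard : ℝ) ≤ c₁)
    (S : Set Γ) (hS : S = {γ : Γ | (γ • F ∩ F).Nonempty})
    (γ : Γ) :
    ∃ l : List Γ, (∀ s ∈ l, s ∈ S) ∧ l.prod = γ ∧
      (l.length : ℝ) ≤ c₁ * (dist x₀ (γ • x₀) + 1) := by
    classical
  set D := dist x₀ (γ • x₀) with hD
  have hD0 : 0 ≤ D := dist_nonneg
  obtain ⟨f, hf0, hfD, hflip⟩ := hgeo x₀ (γ • x₀)
  have hfcont : Continuous f := by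
    have : LipschitzWith 1 f := by
      apply LipschitzWith.of_dist_le_mul
      intro s u
      rw [Real.dist_eq]
      simpa using hflip s u
    exact this.continuous
  set n : ℕ := max 1 ⌈D⌉₊ with hn
  have hn1 : 1 ≤ n := le_max_left _ _
  set t : ℕ → ℝ := fun j => min (j : ℝ) D with ht
  have htmono : ∀ j : ℕ, t j ≤ t (j + 1) := by
    intro j
    exact min_le_min (by exact_mod_cast Nat.le_succ j) le_rfl
  have htdiff : ∀ j : ℕ, t (j + 1) ≤ t j + 1 := by
    intro j
    rcases le_total D (j : ℝ) with h | h
    · have h1 : t j = D := min_eq_right h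
      have h2 : t (j + 1) = D := min_eq_right (by push_cast; linarith)
      rw [h1, h2]; linarith
    · have h1 : t j = (j : ℝ) := min_eq_left h
      have h2 : t (j + 1) ≤ (j : ℝ) + 1 := by
        refine le_trans (min_le_left _ _) ?_
        push_cast; linarith
      rw [h1]; exact h2
  have ht0 : t 0 = 0 := by simp [ht, hD0]
  have htn : t n = D := by
    refine min_eq_right ?_
    refine le_trans (Nat.le_ceil D) ?_
    exact_mod_cast Nat.cast_le.mpr (le_max_right 1 ⌈D⌉₊)
  have hchoice : ∀ j : ℕ, ∃ g : Γ, f (t j) ∈ g • F := fun j => hcover _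
  set gg : ℕ → Γ := fun j =>
    if j = 0 then 1 else if n ≤ j then γ else Classical.choose (hchoice j) with hgg'
  have hgg : ∀ j ≤ n, f (t j) ∈ gg j • F := by
    intro j hj
    by_cases h0 : j = 0
    · subst h0
      rw [ht0, hf0]
      simp only [hgg', if_pos rfl, one_smul]
      exact hx₀
    · by_cases hnj : n ≤ j
      · have hjn : j = n := le_antisymm hj hnj
        subst hjn
        simp only [hgg', if_neg h0, if_pos hnj, htn, hfD]
        exact ⟨x₀, hx₀, hfD.symm⟩
      · simp only [hgg', if_neg h0, if_neg hnj]
        exact Classical.choose_spec (hchoice j)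
  have hggn : gg n = γ := by
    simp only [hgg', if_neg (by omega : ¬ n = 0), if_pos le_rfl]
  have main : ∀ j : ℕ, j ≤ n → ∃ l : List Γ, (∀ s ∈ l, s ∈ S) ∧ l.prod = gg j ∧
      (l.length : ℝ) ≤ j * c₁ := by
    intro j
    induction j with
    | zero =>
      intro _
      exact ⟨[], by simp, by simp [hgg'], by simp⟩
    | succ j ih =>
      intro hj
      obtain ⟨l, hl, hprod, hlen⟩ := ih (le_trans (Nat.le_succ j) hj)
      set K : Set X := f '' Set.Icc (t j) (t (j + 1)) with hK
      have hKconn : IsPreconnected K := isPreconnected_Icc.image f hfcont.continuousOn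
      have hKclosed : IsClosed K := (isCompact_Icc.image hfcont).isClosed
      have hKball : K ⊆ Metric.closedBall (f (t j)) 1 := by
        rintro x ⟨s, ⟨hs1, hs2⟩, rfl⟩
        rw [Metric.mem_closedBall]
        refine le_trans (hflip s (t j)) ?_
        rw [abs_of_nonneg (by linarith)]
        have := htdiff j
        linarith
      have hTsub : {g : Γ | (g • F ∩ K).Nonempty} ⊆
          {g : Γ | (g • F ∩ Metric.closedBall (f (t j)) 1).Nonempty} := by
        rintro g ⟨x, hx1, hx2⟩
        exact ⟨x, hx1, hKball hx2⟩
      have hTfin : ({g : Γ | (g • F ∩ K).Nonempty}).Finite :=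
        (hball (f (t j))).1.subset hTsub
      have hTcard : (({g : Γ | (g • F ∩ K).Nonempty}).ncard : ℝ) ≤ c₁ := by
        refine le_trans ?_ (hball (f (t j))).2
        exact_mod_cast Nat.cast_le.mpr (Set.ncard_le_ncard hTsub (hball (f (t j))).1)
      have ha : (gg j • F ∩ K).Nonempty :=
        ⟨f (t j), hgg j (le_trans (Nat.le_succ j) hj),
          ⟨t j, ⟨le_rfl, htmono j⟩, rfl⟩⟩
      have hbb : (gg (j + 1) • F ∩ K).Nonempty :=
        ⟨f (t (j + 1)), hgg (j + 1) hj, ⟨t (j + 1), ⟨htmono j, le_rfl⟩, rfl⟩⟩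
      obtain ⟨l', hl', hprod', hlen'⟩ :=
        chain_lemma hiso hFclosed hKconn hKclosed (fun x _ => hcover x) hTfin ha hbb
      refine ⟨l ++ l', ?_, ?_, ?_⟩
      · intro s hs
        rcases List.mem_append.1 hs with hs | hs
        · exact hl s hs
        · rw [hS]; exact hl' s hs
      · rw [List.prod_append, hprod, hprod', mul_inv_cancel_left]
      · have hlen'' : (l'.length : ℝ) ≤ c₁ := le_trans (by exact_mod_cast hlen') hTcard
        rw [List.length_append]
        push_cast
        linarith
  obtain ⟨l, hl, hprod, hlen⟩ := main n le_rfl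
  refine ⟨l, hl, by rw [hprod, hggn], ?_⟩
  have hnD : (n : ℝ) ≤ D + 1 := by
    rcases max_cases 1 ⌈D⌉₊ with ⟨h1, h2⟩ | ⟨h1, h2⟩
    · rw [hn, h1]; push_cast; linarith
    · rw [hn, h1]
      exact le_of_lt (Nat.ceil_lt_add_one hD0)
  calc (l.length : ℝ) ≤ n * c₁ := hlen
    _ ≤ (D + 1) * c₁ := by
        apply mul_le_mul_of_nonneg_right hnD (by linarith)
    _ = c₁ * (D + 1) := by ring
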